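/- Let a > 1, T > 0 and ξ ∈ (0, π). There exists a constant C > 0, depending only on a, T and ξ, such that for all integers N ≥ 1, all integers M with 1 ≤ M ≤ N + 1, and all ψ ∈ ℝ: |Σ_{j=0}^{M−1} a^{jT/N}·cos(ξ j + ψ)| ≤ C. -/

import Mathlib

/-- the sums `Σ_{j=0}^{M-1} a^{jT/N} cos(ξj + ψ)` are bounded
uniformly in `N ≥ 1`, `1 ≤ M ≤ N + 1` and the phase `ψ`. -/
theorem stmt_18 (a T ξ : ℝ) (ha : 1 < a) (hT : 0 < T) (hξ : ξ ∈ Set.Ioo 0 Real.pi) :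
    ∃ C > (0 : ℝ), ∀ N : ℕ, 1 ≤ N → ∀ M : ℕ, 1 ≤ M → M ≤ N + 1 → ∀ ψ : ℝ,
      |∑ j ∈ Finset.range M, a ^ ((j : ℝ) * T / (N : ℝ)) * Real.cos (ξ * (j : ℝ) + ψ)| ≤ C := by
  obtain ⟨hξ0, hξπ⟩ := hξ
  have hsin : 0 < Real.sin ξ := Real.sin_pos_of_pos_of_lt_pi hξ0 hξπ
  have ha0 : (0:ℝ) < a := lt_trans one_pos ha
  refine ⟨(a ^ (2*T) + 1) / Real.sin ξ, by positivity, ?_⟩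
  intro N hN M hM1 hM2 ψ
  have hN0 : (0:ℝ) < N := by exact_mod_cast hN
  set b : ℝ := a ^ (T / (N:ℝ)) with hbdef
  have hb1 : 1 ≤ b := Real.one_le_rpow ha.le (by positivity)
  have hb0 : 0 < b := lt_of_lt_of_le one_pos hb1
  set z : ℂ := (b : ℂ) * Complex.exp (ξ * Complex.I) with hzdef
  have hzj : ∀ j : ℕ, z ^ j = (b:ℂ)^j * Complex.exp ((ξ * j : ℝ) * Complex.I) := by
    intro j
    rw [hzdef, mul_pow, ← Complex.exp_nat_mul,
      show ((j:ℂ) * ((ξ:ℂ) * Complex.I)) = ((ξ * j : ℝ):ℂ) * Complex.I by push_cast; ring]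
  have hterm : ∀ j : ℕ, a ^ ((j : ℝ) * T / (N : ℝ)) * Real.cos (ξ * (j : ℝ) + ψ)
      = (Complex.exp ((ψ:ℝ) * Complex.I) * z ^ j).re := by
    intro j
    have he : Complex.exp (((ξ * j + ψ : ℝ)) * Complex.I)
        = Complex.exp ((ξ * j : ℝ) * Complex.I) * Complex.exp ((ψ:ℝ) * Complex.I) := by
      rw [← Complex.exp_add]; congr 1; push_cast; ring
    rw [hzj j, show Complex.exp ((ψ:ℝ) * Complex.I) * ((b:ℂ)^j * Complex.exp ((ξ * j : ℝ) * Complex.I))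
        = (b:ℂ)^j * Complex.exp (((ξ * j + ψ : ℝ)) * Complex.I) by rw [he]; ring]
    rw [show ((b:ℂ)^j) = ((b^j : ℝ) : ℂ) by push_cast; ring,
      Complex.re_ofReal_mul, Complex.exp_ofReal_mul_I_re]
    congr 1
    rw [hbdef, ← Real.rpow_natCast (a ^ (T / (N:ℝ))) j, ← Real.rpow_mul ha0.le]
    ring_nf
  have hz_ne : z ≠ 1 := by
    intro h
    have : z.im = 0 := by rw [h]; simp
    rw [hzdef] at this
    simp [Complex.exp_mul_I] at this
    rcases this with h' | h'
    · exact absurd h' hb0.ne'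
    · exact absurd h' hsin.ne'
  have hsum : ∑ j ∈ Finset.range M, a ^ ((j : ℝ) * T / (N : ℝ)) * Real.cos (ξ * (j : ℝ) + ψ)
      = (Complex.exp ((ψ:ℝ) * Complex.I) * ((z ^ M - 1) / (z - 1))).re := by
    rw [← geom_sum_eq hz_ne, Finset.mul_sum, Complex.re_sum]
    exact Finset.sum_congr rfl fun j _ => hterm j
  rw [hsum]
  have habs : ∀ w : ℂ, |w.re| ≤ ‖w‖ := fun w => Complex.abs_re_le_norm w
  refine le_trans (habs _) ?_
  rw [norm_mul, norm_div, Complex.norm_exp_ofReal_mul_I, one_mul]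
  have habsz : ‖z‖ = b := by
    rw [hzdef, norm_mul, Complex.norm_exp_ofReal_mul_I, mul_one, Complex.norm_real,
      Real.norm_of_nonneg hb0.le]
  have hnum : ‖z ^ M - 1‖ ≤ a ^ (2*T) + 1 := by
    refine le_trans (norm_sub_le _ _) ?_
    rw [norm_pow, habsz, norm_one]
    have hbM : b ^ M ≤ a ^ (2*T) := by
      rw [hbdef, ← Real.rpow_natCast (a ^ (T / (N:ℝ))) M, ← Real.rpow_mul ha0.le]
      apply Real.rpow_le_rpow_left_iff ha |>.mpr
      rw [div_mul_eq_mul_div, div_le_iff₀ hN0]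
      have : (M:ℝ) ≤ (N:ℝ) + 1 := by exact_mod_cast hM2
      nlinarith [hN0, hT.le, (show (1:ℝ) ≤ N by exact_mod_cast hN)]
    linarith
  have hden : Real.sin ξ ≤ ‖z - 1‖ := by
    have him : (z - 1).im = b * Real.sin ξ := by
      rw [hzdef]; simp [Complex.exp_mul_I, Complex.sin_ofReal_re]
    calc Real.sin ξ ≤ b * Real.sin ξ := by nlinarith
      _ = |(z - 1).im| := by rw [him, abs_of_pos (by positivity)]
      _ ≤ ‖z - 1‖ := Complex.abs_im_le_norm _
  have hden0 : 0 < ‖z - 1‖ := lt_of_lt_of_le hsin hden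
  exact div_le_div₀ (by positivity) hnum hsin hden
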